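/- arXiv:1910.13502 — 3 statements merged into one kernel-verified Lean document; each statement's English description precedes it below -/
import Mathlib

section
/- Let C be a nonempty finite index set and let α : C → ℝ satisfy α_j > 0 for all j ∈ C. Then the minimum of the delay max_{j∈C} ε_j α_j over all task assignments ε (ε_j ≥ 0, Σ_{j∈C} ε_j = 1) exists, is attained, and equals (Σ_{k∈C} 1/α_k)⁻¹. Equivalently, the maximal computation rate 1 / (min over assignments of the delay) equals Σ_{k∈C} 1/α_k. -/
/-- Proposition 1 for a single cluster: the minimum of the delay
`max_{j ∈ C} ε j * α j` over all task assignments `ε` exists, is attained, and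
equals `(∑ k ∈ C, 1/α k)⁻¹`; equivalently the maximal computation rate (the
reciprocal of this minimal delay) equals `∑ k ∈ C, 1/α k`. -/
theorem prop1_single_cluster {ι : Type*} (C : Finset ι) (hC : C.Nonempty)
    (α : ι → ℝ) (hα : ∀ j ∈ C, 0 < α j) :
    IsLeast {d : ℝ | ∃ ε : ι → ℝ, (∀ j ∈ C, 0 ≤ ε j) ∧ (∑ j ∈ C, ε j = 1) ∧
        d = C.sup' hC (fun j => ε j * α j)}
      ((∑ k ∈ C, (α k)⁻¹)⁻¹) ∧
    ((∑ k ∈ C, (α k)⁻¹)⁻¹)⁻¹ = ∑ k ∈ C, (α k)⁻¹ := by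
  set S := ∑ k ∈ C, (α k)⁻¹ with hS
  have hSpos : 0 < S := Finset.sum_pos (fun k hk => inv_pos.2 (hα k hk)) hC
  refine ⟨⟨?_, ?_⟩, inv_inv S⟩
  · refine ⟨fun j => (α j)⁻¹ / S, fun j hj => div_nonneg (inv_nonneg.2 (hα j hj).le) hSpos.le, ?_, ?_⟩
    · rw [← Finset.sum_div, ← hS, div_self hSpos.ne']
    · apply le_antisymm
      · obtain ⟨j, hj⟩ := hC
        refine le_trans ?_ (Finset.le_sup' (fun j => (α j)⁻¹ / S * α j) hj)
        rw [div_mul_eq_mul_div, inv_mul_cancel₀ (hα j hj).ne', one_div]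
      · apply Finset.sup'_le
        intro j hj
        rw [div_mul_eq_mul_div, inv_mul_cancel₀ (hα j hj).ne', one_div]
  · rintro d ⟨ε, hε0, hεsum, rfl⟩
    set M := C.sup' hC (fun j => ε j * α j) with hM
    have h1 : (1:ℝ) ≤ M * S := by
      calc (1:ℝ) = ∑ j ∈ C, ε j := hεsum.symm
        _ ≤ ∑ j ∈ C, M * (α j)⁻¹ := by
            apply Finset.sum_le_sum
            intro j hj
            have : ε j * α j ≤ M := Finset.le_sup' (fun j => ε j * α j) hj
            rw [← le_div_iff₀ (hα j hj)] at this
            simpa [div_eq_mul_inv] using this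
        _ = M * S := by rw [← Finset.mul_sum]
    rw [inv_le_iff_one_le_mul₀' hSpos]
    linarith
end

section
/- Let C be a nonempty finite index set and let α : C → ℝ satisfy α_j > 0 for all j ∈ C. For every task assignment ε (ε_j ≥ 0, Σ_{j∈C} ε_j = 1) there exists a task assignment ε' such that ε'_j α_j = ε'_k α_k for all j, k ∈ C and max_{j∈C} ε'_j α_j ≤ max_{j∈C} ε_j α_j. -/
/-- Exchange-argument step in the proof of Proposition 1: for every task assignment
`ε` there exists a task assignment `ε'` that equalizes all products `ε' j * α j`
(over `j ∈ C`) and whose delay is no larger than that of `ε`. -/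
theorem prop1_exchange {ι : Type*} (C : Finset ι) (hC : C.Nonempty)
    (α : ι → ℝ) (hα : ∀ j ∈ C, 0 < α j)
    (ε : ι → ℝ) (hε0 : ∀ j ∈ C, 0 ≤ ε j) (hε1 : ∑ j ∈ C, ε j = 1) :
    ∃ ε' : ι → ℝ, (∀ j ∈ C, 0 ≤ ε' j) ∧ (∑ j ∈ C, ε' j = 1) ∧
      (∀ j ∈ C, ∀ k ∈ C, ε' j * α j = ε' k * α k) ∧
      C.sup' hC (fun j => ε' j * α j) ≤ C.sup' hC (fun j => ε j * α j) := by
  set S : ℝ := ∑ j ∈ C, (α j)⁻¹ with hS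
  have hSpos : 0 < S := Finset.sum_pos (fun j hj => inv_pos.mpr (hα j hj)) hC
  refine ⟨fun j => (α j)⁻¹ / S, fun j hj => div_nonneg (inv_nonneg.mpr (hα j hj).le) hSpos.le, ?_, ?_, ?_⟩
  · rw [← Finset.sum_div, ← hS, div_self hSpos.ne']
  · intro j hj k hk
    rw [div_mul_eq_mul_div, div_mul_eq_mul_div,
      inv_mul_cancel₀ (hα j hj).ne', inv_mul_cancel₀ (hα k hk).ne']
  · set M : ℝ := C.sup' hC (fun j => ε j * α j) with hM
    have hle : ∀ j ∈ C, (α j)⁻¹ / S * α j ≤ M := by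
      intro j hj
      rw [div_mul_eq_mul_div, inv_mul_cancel₀ (hα j hj).ne']
      rw [div_le_iff₀ hSpos]
      have h1 : (1 : ℝ) ≤ M * S := by
        calc (1 : ℝ) = ∑ j ∈ C, ε j := hε1.symm
          _ ≤ ∑ j ∈ C, M * (α j)⁻¹ := by
              apply Finset.sum_le_sum
              intro i hi
              have hMi : ε i * α i ≤ M := Finset.le_sup' (fun j => ε j * α j) hi
              rw [← le_div_iff₀ (hα i hi)] at hMi
              calc ε i ≤ M / α i := hMi
                _ = M * (α i)⁻¹ := div_eq_mul_inv _ _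
          _ = M * S := by rw [hS, Finset.mul_sum]
      linarith
    exact Finset.sup'_le hC _ hle
end

section
/- Let M be a nonempty finite set of masters, for each i ∈ M let C_i be a nonempty finite index set, and let α_{ij} > 0 for all i ∈ M, j ∈ C_i. Then the minimum over all families of task assignments ((ε_{ij})_{j∈C_i})_{i∈M} (each satisfying ε_{ij} ≥ 0 and Σ_{j∈C_i} ε_{ij} = 1) of the overall delay max_{i∈M} max_{j∈C_i} ε_{ij} α_{ij} equals max_{i∈M} (Σ_{j∈C_i} 1/α_{ij})⁻¹. Equivalently, the maximal overall computation rate equals R' = min_{i∈M} Σ_{j∈C_i} 1/α_{ij}. -/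
/-- Formula (10) of Proposition 1 (multi-cluster version): the minimum over all
families of per-cluster task assignments of the overall delay
`max_{i ∈ M} max_{j ∈ C i} ε i j * α i j` exists, is attained, and equals
`max_{i ∈ M} (∑ j ∈ C i, 1/α i j)⁻¹`; equivalently, the maximal overall
computation rate (its reciprocal) equals `R' = min_{i ∈ M} ∑ j ∈ C i, 1/α i j`. -/
theorem prop1_multicluster {ι κ : Type*} (M : Finset ι) (hM : M.Nonempty)
    (C : ι → Finset κ) (hC : ∀ i ∈ M, (C i).Nonempty)
    (α : ι → κ → ℝ) (hα : ∀ i ∈ M, ∀ j ∈ C i, 0 < α i j) :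
    IsLeast {d : ℝ | ∃ ε : ι → κ → ℝ,
        (∀ i ∈ M, ∀ j ∈ C i, 0 ≤ ε i j) ∧ (∀ i ∈ M, ∑ j ∈ C i, ε i j = 1) ∧
        d = M.attach.sup' (Finset.attach_nonempty_iff.mpr hM)
          (fun i => (C i.1).sup' (hC i.1 i.2) (fun j => ε i.1 j * α i.1 j))}
      (M.sup' hM (fun i => (∑ j ∈ C i, (α i j)⁻¹)⁻¹)) ∧
    (M.sup' hM (fun i => (∑ j ∈ C i, (α i j)⁻¹)⁻¹))⁻¹ =
      M.inf' hM (fun i => ∑ j ∈ C i, (α i j)⁻¹) := by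
  set S : ι → ℝ := fun i => ∑ j ∈ C i, (α i j)⁻¹ with hS
  have hSpos : ∀ i ∈ M, 0 < S i := by
    intro i hi
    exact Finset.sum_pos (fun j hj => inv_pos.mpr (hα i hi j hj)) (hC i hi)
  constructor
  · constructor
    · -- membership: the balanced assignment attains the value
      refine ⟨fun i j => (α i j)⁻¹ / S i, ?_, ?_, ?_⟩
      · intro i hi j hj
        exact div_nonneg (inv_nonneg.mpr (hα i hi j hj).le) (hSpos i hi).le
      · intro i hi
        rw [← Finset.sum_div]
        exact div_self (hSpos i hi).ne'
      · have hinner : ∀ i : {x // x ∈ M},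
            (C i.1).sup' (hC i.1 i.2) (fun j => (α i.1 j)⁻¹ / S i.1 * α i.1 j)
              = (S i.1)⁻¹ := by
          intro i
          have hcongr : ∀ j ∈ C i.1,
              (α i.1 j)⁻¹ / S i.1 * α i.1 j = (S i.1)⁻¹ := by
            intro j hj
            have hαj := (hα i.1 i.2 j hj).ne'
            have hSne := (hSpos i.1 i.2).ne'
            field_simp

          rw [Finset.sup'_congr (hC i.1 i.2) rfl hcongr, Finset.sup'_const]
        apply le_antisymm
        · apply Finset.sup'_le
          intro i hi
          rw [← hinner ⟨i, hi⟩]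
          exact Finset.le_sup' (f := fun i : {x // x ∈ M} =>
            (C i.1).sup' (hC i.1 i.2) (fun j => (α i.1 j)⁻¹ / S i.1 * α i.1 j))
            (Finset.mem_attach M ⟨i, hi⟩)
        · apply Finset.sup'_le
          intro i _
          rw [hinner i]
          exact Finset.le_sup' (f := fun i => (S i)⁻¹) i.2
    · -- lower bound
      rintro d ⟨ε, hnn, hsum, rfl⟩
      apply Finset.sup'_le
      intro i hi
      have h1 : (S i)⁻¹ ≤ (C i).sup' (hC i hi) (fun j => ε i j * α i j) := by
        by_contra h
        push_neg at h
        have hlt : ∀ j ∈ C i, ε i j < (α i j)⁻¹ * (S i)⁻¹ := by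
          intro j hj
          have h2 : ε i j * α i j < (S i)⁻¹ :=
            lt_of_le_of_lt (Finset.le_sup' (f := fun j => ε i j * α i j) hj) h
          have hαj := hα i hi j hj
          calc ε i j = ε i j * α i j * (α i j)⁻¹ := by field_simp
            _ < (S i)⁻¹ * (α i j)⁻¹ := by
                exact mul_lt_mul_of_pos_right h2 (inv_pos.mpr hαj)
            _ = (α i j)⁻¹ * (S i)⁻¹ := mul_comm _ _
        have : (1 : ℝ) < 1 := by
          calc (1 : ℝ) = ∑ j ∈ C i, ε i j := (hsum i hi).symm
            _ < ∑ j ∈ C i, (α i j)⁻¹ * (S i)⁻¹ :=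
                Finset.sum_lt_sum_of_nonempty (hC i hi) hlt
            _ = S i * (S i)⁻¹ := by rw [← Finset.sum_mul]
            _ = 1 := mul_inv_cancel₀ (hSpos i hi).ne'
        exact absurd this (lt_irrefl 1)
      calc (S i)⁻¹ ≤ (C i).sup' (hC i hi) (fun j => ε i j * α i j) := h1
        _ ≤ _ := Finset.le_sup' (f := fun p : {x // x ∈ M} =>
            (C p.1).sup' (hC p.1 p.2) (fun j => ε p.1 j * α p.1 j))
            (Finset.mem_attach M ⟨i, hi⟩)
  · -- reciprocal identity
    obtain ⟨i0, hi0, h0⟩ := Finset.exists_mem_eq_sup' hM (fun i => (S i)⁻¹)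
    rw [h0, inv_inv]
    apply le_antisymm
    · apply Finset.le_inf'
      intro i hi
      have : (S i)⁻¹ ≤ (S i0)⁻¹ := by
        rw [← h0]; exact Finset.le_sup' (f := fun i => (S i)⁻¹) hi
      exact (inv_le_inv₀ (hSpos i hi) (hSpos i0 hi0)).mp this
    · exact Finset.inf'_le _ hi0
end
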